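/- Let N' be an odd positive integer, N = 2N', let u₀, u₁ : ZMod N' → ZMod 4, and let s : ZMod N → ℂ be the interleaved sequence built from (u₀,u₁). Then ∑_{t ∈ ZMod N} |s(t)|² = 10·N. -/

import Mathlib

/-- For `a ∈ ZMod 4`, the complex number `i^a := Complex.I ^ a.val`. -/
noncomputable def zi (a : ZMod 4) : ℂ := Complex.I ^ a.val

/-- Periodic correlation of complex sequences of period `N` at shift `τ`:
`θ_{s,s'}(τ) = ∑_t s(t+τ) · conj (s'(t))`. -/
noncomputable def pcorr {N : ℕ} [NeZero N] (s s' : ZMod N → ℂ) (τ : ZMod N) : ℂ :=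
  ∑ t : ZMod N, s (t + τ) * (starRingEnd ℂ) (s' t)

/-- Periodic correlation of quaternary sequences of period `N` at shift `τ`:
`θ_{u,v}(τ) = ∑_t i^{u(t+τ)} · conj (i^{v(t)})`. -/
noncomputable def qcorr {N : ℕ} [NeZero N] (u v : ZMod N → ZMod 4) (τ : ZMod N) : ℂ :=
  ∑ t : ZMod N, zi (u (t + τ)) * (starRingEnd ℂ) (zi (v t))

/-- The natural reduction `ZMod (2·N') → ZMod N'`. -/
noncomputable def redN (N' : ℕ) (t : ZMod (2 * N')) : ZMod N' :=
  ZMod.castHom (dvd_mul_left N' 2) (ZMod N') t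

/-- The interleaved sequence of period `N = 2·N'` built from the quaternary sequences
`u₀, u₁` of period `N'`:  `s(t) = (1+i)·(i^{u₁(t̄)} + 2·i^{u₀(t̄)})` for even `t` and
`s(t) = (1+i)·i·(i^{u₀(t̄)} − 2·i^{u₁(t̄)})` for odd `t`, where `t̄ = t mod N'`. -/
noncomputable def interleave {N' : ℕ} (u₀ u₁ : ZMod N' → ZMod 4) :
    ZMod (2 * N') → ℂ := fun t =>
  if Even t.val then
    (1 + Complex.I) * (zi (u₁ (redN N' t)) + 2 * zi (u₀ (redN N' t)))
  else
    (1 + Complex.I) * Complex.I * (zi (u₀ (redN N' t)) - 2 * zi (u₁ (redN N' t)))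
lemma normSq_zi (a : ZMod 4) : Complex.normSq (zi a) = 1 := by
  simp [zi, map_pow, Complex.normSq_I]

lemma pair_key (A B : ℂ) (hA : Complex.normSq A = 1) (hB : Complex.normSq B = 1) :
    ‖(1 + Complex.I) * (B + 2 * A)‖ ^ 2
      + ‖(1 + Complex.I) * Complex.I * (A - 2 * B)‖ ^ 2 = 20 := by
  rw [Complex.sq_norm, Complex.sq_norm]
  simp only [Complex.normSq_apply, Complex.add_re, Complex.add_im, Complex.sub_re,
    Complex.sub_im, Complex.mul_re, Complex.mul_im, Complex.one_re, Complex.one_im,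
    Complex.I_re, Complex.I_im, Complex.re_ofNat, Complex.im_ofNat] at *
  nlinarith [hA, hB]

theorem interleaved_sequence_energy (N' : ℕ) (hodd : Odd N') [NeZero N']
    (u₀ u₁ : ZMod N' → ZMod 4) :
    ∑ t : ZMod (2 * N'), ‖interleave u₀ u₁ t‖ ^ 2
      = 10 * (2 * (N' : ℝ)) := by
  have hN'pos : 0 < N' := Nat.pos_of_ne_zero (NeZero.ne N')
  haveI hNZ : NeZero (2 * N') := ⟨by positivity⟩
  set f : ZMod (2 * N') → ℝ := fun t => ‖interleave u₀ u₁ t‖ ^ 2 with hf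
  have hvalN' : ((N' : ZMod (2 * N'))).val = N' := by
    rw [ZMod.val_natCast, Nat.mod_eq_of_lt]; omega
  have key : ∀ t : ZMod (2 * N'), f t + f (t + (N' : ZMod (2 * N'))) = 20 := by
    intro t
    have hred : redN N' (t + (N' : ZMod (2 * N'))) = redN N' t := by
      simp [redN, map_add, map_natCast]
    have hparmod : ((t + (N' : ZMod (2 * N'))).val) % 2 = (t.val + N') % 2 := by
      rw [ZMod.val_add, hvalN']
      exact Nat.mod_mod_of_dvd _ ⟨N', rfl⟩
    obtain ⟨k, hk⟩ := hodd
    have hpar : Even ((t + (N' : ZMod (2 * N'))).val) ↔ ¬ Even t.val := by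
      rw [Nat.even_iff, Nat.even_iff, hparmod]
      omega
    by_cases ht : Even t.val
    · have ht2 : ¬ Even ((t + (N' : ZMod (2 * N'))).val) := by
        rw [hpar]; exact not_not_intro ht
      simp only [hf, interleave, if_pos ht, if_neg ht2, hred]
      exact pair_key _ _ (normSq_zi _) (normSq_zi _)
    · have ht2 : Even ((t + (N' : ZMod (2 * N'))).val) := hpar.mpr ht
      simp only [hf, interleave, if_neg ht, if_pos ht2, hred]
      rw [add_comm]
      exact pair_key _ _ (normSq_zi _) (normSq_zi _)
  have hshift : ∑ t : ZMod (2 * N'), f (t + (N' : ZMod (2 * N'))) = ∑ t, f t :=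
    Equiv.sum_comp (Equiv.addRight (N' : ZMod (2 * N'))) f
  have hsum : (∑ t : ZMod (2 * N'), f t) + (∑ t : ZMod (2 * N'), f t) = 20 * (2 * N') := by
    calc (∑ t : ZMod (2 * N'), f t) + (∑ t : ZMod (2 * N'), f t)
        = ∑ t : ZMod (2 * N'), (f t + f (t + (N' : ZMod (2 * N')))) := by
          rw [Finset.sum_add_distrib, hshift]
      _ = ∑ _t : ZMod (2 * N'), (20 : ℝ) := by simp_rw [key]
      _ = 20 * (2 * N') := by
          rw [Finset.sum_const, Finset.card_univ, ZMod.card]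
          simp [nsmul_eq_mul]; ring
  linarith
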